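/- Let $p$ be a prime, let $k = \mathbb{F}_p(t,u)$ be the field of rational functions in two variables $t, u$ over the prime field $\mathbb{F}_p$, and let $A = k[X,Y]/(Y^p - t - X - uX^p)$. Then $A$ is not isomorphic to the polynomial ring $k[T]$ as a $k$-algebra. -/

import Mathlib

open TensorProduct MvPolynomial

/-- The field `k = 𝔽_p(t,u)` of rational functions in two variables `t = X 0`, `u = X 1`
over the prime field `𝔽_p = ZMod p`, realized as the fraction field of the polynomial
ring `𝔽_p[t,u]`. -/
def RatFunc2 (p : ℕ) [Fact p.Prime] : Type :=
  FractionRing (MvPolynomial (Fin 2) (ZMod p))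

noncomputable instance (p : ℕ) [Fact p.Prime] : Field (RatFunc2 p) :=
  inferInstanceAs (Field (FractionRing (MvPolynomial (Fin 2) (ZMod p))))

noncomputable instance (p : ℕ) [Fact p.Prime] :
    Algebra (MvPolynomial (Fin 2) (ZMod p)) (RatFunc2 p) :=
  inferInstanceAs
    (Algebra (MvPolynomial (Fin 2) (ZMod p)) (FractionRing (MvPolynomial (Fin 2) (ZMod p))))

/-- `k = 𝔽_p(t,u)` is indeed the field of fractions of `𝔽_p[t,u]`. -/
instance (p : ℕ) [Fact p.Prime] :
    IsFractionRing (MvPolynomial (Fin 2) (ZMod p)) (RatFunc2 p) :=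
  inferInstanceAs (IsFractionRing (MvPolynomial (Fin 2) (ZMod p))
    (FractionRing (MvPolynomial (Fin 2) (ZMod p))))

/-- The element `t` of `𝔽_p(t,u)`. -/
noncomputable abbrev tVar (p : ℕ) [Fact p.Prime] : RatFunc2 p :=
  algebraMap (MvPolynomial (Fin 2) (ZMod p)) (RatFunc2 p) (X 0)

/-- The element `u` of `𝔽_p(t,u)`. -/
noncomputable abbrev uVar (p : ℕ) [Fact p.Prime] : RatFunc2 p :=
  algebraMap (MvPolynomial (Fin 2) (ZMod p)) (RatFunc2 p) (X 1)

/-- The `k`-algebra `A = k[X,Y]/(Y^p - t - X - u·X^p)` over `k = 𝔽_p(t,u)`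
(with `X = X 0`, `Y = X 1`). -/
noncomputable abbrev AsanumaExample (p : ℕ) [Fact p.Prime] :=
  MvPolynomial (Fin 2) (RatFunc2 p) ⧸
    Ideal.span {(X 1 : MvPolynomial (Fin 2) (RatFunc2 p)) ^ p
      - C (tVar p) - X 0 - C (uVar p) * (X 0) ^ p}

namespace AsanumaAux
open AddMonoidAlgebra
variable {F : Type*} [Field F]

noncomputable abbrev deg (f : MvPolynomial (Fin 2) F) : Lex (Fin 2 →₀ ℕ) :=
  AddMonoidAlgebra.supDegree toLex f

lemma deg_mul {f g : MvPolynomial (Fin 2) F} (hf : f ≠ 0) (hg : g ≠ 0) :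
    deg (f * g) = deg f + deg g :=
  AddMonoidAlgebra.supDegree_mul toLex.injective (fun _ _ => rfl)
    (mul_ne_zero (by rwa [Ne, AddMonoidAlgebra.leadingCoeff_eq_zero toLex.injective])
      (by rwa [Ne, AddMonoidAlgebra.leadingCoeff_eq_zero toLex.injective])) hf hg

lemma deg_pow {f : MvPolynomial (Fin 2) F} (hf : f ≠ 0) (n : ℕ) :
    deg (f ^ n) = n • deg f := by
  induction n with
  | zero => simpa [deg] using MvPolynomial.supDegree_toLex_C (σ := Fin 2) (1 : F)
  | succ n ih => rw [pow_succ, deg_mul (pow_ne_zero _ hf) hf, ih, succ_nsmul]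

lemma deg_pderiv_lt {i : Fin 2} {f : MvPolynomial (Fin 2) F} (h : pderiv i f ≠ 0) :
    deg (pderiv i f) < deg f := by
  classical
  have hrepr : pderiv i f
      = ∑ s ∈ f.support, monomial (s - Finsupp.single i 1) (f.coeff s * s i) := by
    conv_lhs => rw [f.as_sum]
    rw [map_sum]
    simp only [pderiv_monomial]
  have hex : ∃ s ∈ f.support, s i ≠ 0 := by
    by_contra hno
    push_neg at hno
    apply h
    rw [hrepr]
    refine Finset.sum_eq_zero fun s hs => ?_
    rw [hno s hs]
    simp
  obtain ⟨s, hs, hsi⟩ := hex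
  have h0lt : (0 : Lex (Fin 2 →₀ ℕ)) < toLex s := by
    refine lt_of_le_of_ne (Finsupp.toLex_monotone zero_le) fun h0 => ?_
    have hs0 : (0 : Fin 2 →₀ ℕ) = s := toLex.injective h0
    exact hsi (by rw [← hs0]; rfl)
  have hbotlt : (⊥ : Lex (Fin 2 →₀ ℕ)) < deg f :=
    lt_of_lt_of_le (lt_of_le_of_lt bot_le h0lt) (Finset.le_sup hs)
  rw [hrepr]
  refine lt_of_le_of_lt AddMonoidAlgebra.supDegree_sum_le ((Finset.sup_lt_iff hbotlt).mpr ?_)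
  intro m hm
  rw [← single_eq_monomial, AddMonoidAlgebra.supDegree_single]
  split_ifs with h0
  · exact hbotlt
  · have hmi : m i ≠ 0 := by
      intro hh
      exact h0 (by rw [hh]; simp)
    have hlt : toLex (m - Finsupp.single i 1) < toLex m := by
      refine lt_of_le_of_ne (Finsupp.toLex_monotone tsub_le_self) fun hcontra => ?_
      have heq : m - Finsupp.single i 1 = m := toLex.injective hcontra
      have h2 := DFunLike.congr_fun heq i
      rw [Finsupp.tsub_apply, Finsupp.single_eq_same] at h2
      omega
    exact lt_of_lt_of_le hlt (Finset.le_sup hm)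


lemma deg_wronskian_lt (i : Fin 2) {f g : MvPolynomial (Fin 2) F} (hf : f ≠ 0) (hg : g ≠ 0)
    (hw : f * pderiv i g - pderiv i f * g ≠ 0) :
    deg (f * pderiv i g - pderiv i f * g) < deg f + deg g := by
  have h1 : pderiv i g ≠ 0 → deg (f * pderiv i g) < deg f + deg g := fun hne => by
    rw [deg_mul hf hne]; exact add_lt_add_right (deg_pderiv_lt hne) _
  have h2 : pderiv i f ≠ 0 → deg (pderiv i f * g) < deg f + deg g := fun hne => by
    rw [deg_mul hne hg]; exact add_lt_add_left (deg_pderiv_lt hne) _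
  have hne : pderiv i g ≠ 0 ∨ pderiv i f ≠ 0 := by
    by_contra hcon
    push_neg at hcon
    apply hw
    rw [hcon.1, hcon.2]; ring
  have htop : (⊥ : Lex (Fin 2 →₀ ℕ)) < deg f + deg g := by
    rcases hne with hne | hne
    · exact lt_of_le_of_lt bot_le (lt_of_le_of_lt bot_le (by
        calc deg f + deg (pderiv i g) < deg f + deg g :=
          add_lt_add_right (deg_pderiv_lt hne) _)) |>.trans_le le_rfl
    · exact lt_of_le_of_lt bot_le (add_lt_add_left (deg_pderiv_lt hne) _)
  refine lt_of_le_of_lt AddMonoidAlgebra.supDegree_sub_le (max_lt ?_ ?_)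
  · rcases eq_or_ne (pderiv i g) 0 with h | h
    · rw [h, mul_zero]
      simpa [AddMonoidAlgebra.supDegree_zero] using htop
    · exact h1 h
  · rcases eq_or_ne (pderiv i f) 0 with h | h
    · rw [h, zero_mul]
      simpa [AddMonoidAlgebra.supDegree_zero] using htop
    · exact h2 h

end AsanumaAux

/-- **Example 1, nontriviality.** Let `p` be a prime, `k = 𝔽_p(t,u)` and
`A = k[X,Y]/(Y^p - t - X - u·X^p)`.  Then `A` is not isomorphic to the polynomial ring
`k[T]` as a `k`-algebra. -/
theorem asanumaExample_not_polynomial_ring (p : ℕ) [Fact p.Prime] :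
    IsEmpty (AsanumaExample p ≃ₐ[RatFunc2 p] Polynomial (RatFunc2 p)) := by
  constructor
  intro e
  obtain ⟨q, hpq⟩ := Nat.exists_eq_add_of_le (Fact.out : p.Prime).two_le
  subst hpq
  -- the composite algebra morphism to the base field
  let ψ : MvPolynomial (Fin 2) (RatFunc2 (2 + q)) →ₐ[RatFunc2 (2 + q)] RatFunc2 (2 + q) :=
    ((Polynomial.aeval (0 : RatFunc2 (2 + q))).comp e.toAlgHom).comp
      (Ideal.Quotient.mkₐ (RatFunc2 (2 + q)) _)
  set rel : MvPolynomial (Fin 2) (RatFunc2 (2 + q)) :=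
    (X 1 : MvPolynomial (Fin 2) (RatFunc2 (2 + q))) ^ (2 + q)
      - C (tVar (2 + q)) - X 0 - C (uVar (2 + q)) * (X 0) ^ (2 + q) with hreldef
  have hmem : rel ∈ Ideal.span {rel} := Ideal.subset_span rfl
  have h0 : Ideal.Quotient.mkₐ (RatFunc2 (2 + q)) (Ideal.span {rel}) rel = 0 := by
    rwa [Ideal.Quotient.mkₐ_eq_mk, Ideal.Quotient.eq_zero_iff_mem]
  have hrel : ψ rel = 0 := by
    simp only [ψ, AlgHom.comp_apply]
    erw [h0]; simp
  set x := ψ (X 0) with hxdef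
  set y := ψ (X 1) with hydef
  have hxt : ψ (C (tVar (2 + q))) = tVar (2 + q) := by
    rw [← MvPolynomial.algebraMap_eq]; exact ψ.commutes _
  have hxu : ψ (C (uVar (2 + q))) = uVar (2 + q) := by
    rw [← MvPolynomial.algebraMap_eq]; exact ψ.commutes _
  have heq : y ^ (2 + q) = tVar (2 + q) + x + uVar (2 + q) * x ^ (2 + q) := by
    rw [hreldef] at hrel
    simp only [map_sub, map_mul, map_pow, hxt, hxu, ← hxdef, ← hydef] at hrel
    linear_combination hrel
  clear hrel h0 hmem hreldef
  obtain ⟨a, c, hcmem, hx⟩ :=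
    IsFractionRing.div_surjective (A := MvPolynomial (Fin 2) (ZMod (2 + q))) x
  obtain ⟨b, d, hdmem, hy⟩ :=
    IsFractionRing.div_surjective (A := MvPolynomial (Fin 2) (ZMod (2 + q))) y
  have hc0 : c ≠ 0 := nonZeroDivisors.ne_zero hcmem
  have hd0 : d ≠ 0 := nonZeroDivisors.ne_zero hdmem
  have hC : algebraMap (MvPolynomial (Fin 2) (ZMod (2 + q))) (RatFunc2 (2 + q)) c ≠ 0 :=
    IsFractionRing.to_map_ne_zero_of_mem_nonZeroDivisors hcmem
  have hD : algebraMap (MvPolynomial (Fin 2) (ZMod (2 + q))) (RatFunc2 (2 + q)) d ≠ 0 :=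
    IsFractionRing.to_map_ne_zero_of_mem_nonZeroDivisors hdmem
  rw [← hx, ← hy] at heq
  have hinj := IsFractionRing.injective (MvPolynomial (Fin 2) (ZMod (2 + q))) (RatFunc2 (2 + q))
  field_simp [hC, hD] at heq
  rw [div_pow, div_pow] at heq
  field_simp at heq
  have E' : c * ((b * c) ^ (2 + q))
      = c * (X 0 * (c * d) ^ (2 + q) + a * c ^ (1 + q) * d ^ (2 + q)
          + X 1 * (a * d) ^ (2 + q)) := by
    apply hinj
    simp only [map_add, map_mul, map_pow]
    linear_combination heq
  have E := mul_left_cancel₀ hc0 E'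
  clear E' heq hx hy hxt hxu hC hD hinj
  have hp0 : ((2 + q : ℕ) : MvPolynomial (Fin 2) (ZMod (2 + q))) = 0 :=
    CharP.cast_eq_zero _ (2 + q)
  have hq1 : ((1 + q : ℕ) : MvPolynomial (Fin 2) (ZMod (2 + q))) = -1 := by
    push_cast at hp0 ⊢
    linear_combination hp0
  have dpow : ∀ (i : Fin 2) (f : MvPolynomial (Fin 2) (ZMod (2 + q))),
      pderiv i (f ^ (2 + q)) = 0 := by
    intro i f
    rw [pderiv_pow, hp0]
    ring
  have hEt := congrArg (pderiv (0 : Fin 2)) E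
  have hEu := congrArg (pderiv (1 : Fin 2)) E
  simp only [map_add, pderiv_mul, dpow, pderiv_pow, pderiv_X_self,
    pderiv_X_of_ne (show (1 : Fin 2) ≠ 0 by decide),
    pderiv_X_of_ne (show (0 : Fin 2) ≠ 1 by decide),
    Nat.add_sub_cancel_left, hq1, mul_zero, zero_mul, add_zero, zero_add,
    one_mul, mul_one, neg_mul, neg_zero] at hEt hEu
  have keyt : (c ^ q * d ^ (2 + q)) * (c ^ 2 + pderiv (0 : Fin 2) a * c - a * pderiv 0 c)
      = 0 := by linear_combination -hEt
  have keyu : d ^ (2 + q) * (a ^ (2 + q) - c ^ q * (a * pderiv (1 : Fin 2) c - pderiv 1 a * c))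
      = 0 := by linear_combination -hEu
  have Et : c ^ 2 = a * pderiv (0 : Fin 2) c - pderiv 0 a * c := by
    rcases mul_eq_zero.mp keyt with h | h
    · exact absurd h (mul_ne_zero (pow_ne_zero _ hc0) (pow_ne_zero _ hd0))
    · linear_combination h
  have Eu : a ^ (2 + q) = c ^ q * (a * pderiv (1 : Fin 2) c - pderiv 1 a * c) := by
    rcases mul_eq_zero.mp keyu with h | h
    · exact absurd h (pow_ne_zero _ hd0)
    · linear_combination h
  have ha : a ≠ 0 := by
    rintro rfl
    simp only [zero_mul, map_zero, mul_zero, sub_zero, zero_sub, neg_eq_zero,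
      mul_eq_zero] at Et
    have hc2 : c ^ 2 = 0 := by linear_combination Et
    exact hc0 (pow_eq_zero_iff (n := 2) (by norm_num) |>.mp hc2)
  have hwt : a * pderiv (0 : Fin 2) c - pderiv 0 a * c ≠ 0 := by
    intro h
    rw [h] at Et
    exact hc0 (pow_eq_zero_iff (n := 2) (by norm_num) |>.mp Et)
  have hwu : a * pderiv (1 : Fin 2) c - pderiv 1 a * c ≠ 0 := by
    intro h
    rw [h, mul_zero] at Eu
    exact ha (pow_eq_zero_iff (n := 2 + q) (by omega) |>.mp Eu)
  -- degree comparisons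
  have h1 : AsanumaAux.deg c < AsanumaAux.deg a := by
    have h2 : (2 : ℕ) • AsanumaAux.deg c < AsanumaAux.deg a + AsanumaAux.deg c := by
      rw [← AsanumaAux.deg_pow hc0 2, Et]
      exact AsanumaAux.deg_wronskian_lt _ ha hc0 hwt
    rw [two_nsmul] at h2
    exact lt_of_add_lt_add_right h2
  have h2 : AsanumaAux.deg a < AsanumaAux.deg c := by
    have key : (2 + q) • AsanumaAux.deg a
        < q • AsanumaAux.deg c + (AsanumaAux.deg a + AsanumaAux.deg c) := by
      rw [← AsanumaAux.deg_pow ha (2 + q), Eu,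
        AsanumaAux.deg_mul (pow_ne_zero _ hc0) hwu, AsanumaAux.deg_pow hc0 q]
      exact add_lt_add_right (AsanumaAux.deg_wronskian_lt _ ha hc0 hwu) _
    by_contra hcon
    push_neg at hcon
    have hle : q • AsanumaAux.deg c + (AsanumaAux.deg a + AsanumaAux.deg c)
        ≤ (2 + q) • AsanumaAux.deg a := by
      calc q • AsanumaAux.deg c + (AsanumaAux.deg a + AsanumaAux.deg c)
          ≤ q • AsanumaAux.deg a + (AsanumaAux.deg a + AsanumaAux.deg a) := by
            gcongr
        _ = (2 + q) • AsanumaAux.deg a := by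
            rw [add_nsmul, two_nsmul]
            abel
    exact absurd key (not_lt.mpr hle)
  exact absurd h2 (not_lt.mpr h1.le)
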